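/- For any matroid M, the following are equivalent: (i) for every pair of bases B₀, B₁ of M there is a bijection f : B₀ → B₁ such that (B₀ \ {x}) ∪ {f(x)} is a base for each x ∈ B₀; (ii) for every pair of bases B₀, B₁ of M there is a bijection f : B₀ → B₁ such that (B₁ \ {f(x)}) ∪ {x} is a base for each x ∈ B₀. -/

import Mathlib

theorem stmt_5 {α : Type*} (M : Matroid α) :
    (∀ B₀ B₁ : Set α, M.IsBase B₀ → M.IsBase B₁ →
      ∃ f : B₀ → B₁, Function.Bijective f ∧
        ∀ x : B₀, M.IsBase (insert (f x : α) (B₀ \ {(x : α)}))) ↔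
    (∀ B₀ B₁ : Set α, M.IsBase B₀ → M.IsBase B₁ →
      ∃ f : B₀ → B₁, Function.Bijective f ∧
        ∀ x : B₀, M.IsBase (insert (x : α) (B₁ \ {(f x : α)}))) := by
  constructor
  · intro h B₀ B₁ hB₀ hB₁
    obtain ⟨g, hg, hgb⟩ := h B₁ B₀ hB₁ hB₀
    let e := Equiv.ofBijective g hg
    refine ⟨e.symm, e.symm.bijective, fun x => ?_⟩
    have hx : g (e.symm x) = x := e.apply_symm_apply x
    have := hgb (e.symm x)
    rwa [hx] at this
  · intro h B₀ B₁ hB₀ hB₁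
    obtain ⟨g, hg, hgb⟩ := h B₁ B₀ hB₁ hB₀
    let e := Equiv.ofBijective g hg
    refine ⟨e.symm, e.symm.bijective, fun x => ?_⟩
    have hx : g (e.symm x) = x := e.apply_symm_apply x
    have := hgb (e.symm x)
    rwa [hx] at this
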